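/- arXiv:1801.02267 — 2 statements merged into one kernel-verified Lean document; each statement's English description precedes it below -/
import Mathlib

section
/- Let L be a linear functional on complex polynomials, (P_n)_{n≥0} a monic orthogonal polynomial sequence for L, and suppose L satisfies the Pearson equation L[λ(x)π(x)] = L[φ(x)π(x−1)] for every polynomial π, where deg λ = p and deg φ = q+1. Then for every n there exist scalars B_k(n), for max(−n, −p) ≤ k ≤ q+1, such that φ(x)·P_n(x−1) = Σ_{k=max(−n,−p)}^{q+1} B_k(n) P_{n+k}(x); equivalently, in the expansion of φ(x)P_n(x−1) in the basis (P_m), the coefficient of P_{n+k} vanishes whenever k < −p. -/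
open Polynomial

private lemma expand_aux (P : ℕ → Polynomial ℂ)
    (hmonic : ∀ n, (P n).Monic) (hdeg : ∀ n, (P n).natDegree = n) :
    ∀ (N : ℕ) (f : Polynomial ℂ), f.natDegree ≤ N →
      ∃ c : ℕ → ℂ, f = ∑ m ∈ Finset.range (N + 1), c m • P m := by
  intro N
  induction N with
  | zero =>
    intro f hf
    refine ⟨fun _ => f.coeff 0, ?_⟩
    have h0 : P 0 = 1 := ((hmonic 0).natDegree_eq_zero).mp (hdeg 0)
    rw [Polynomial.eq_C_of_natDegree_le_zero hf]
    simp [h0, Polynomial.smul_eq_C_mul]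
  | succ N ih =>
    intro f hf
    set a := f.coeff (N + 1) with ha
    set g := f - a • P (N + 1) with hg
    have hcoef : (P (N + 1)).coeff (N + 1) = 1 := by
      have := (hmonic (N + 1)).leadingCoeff
      rwa [Polynomial.leadingCoeff, hdeg] at this
    have hgdeg : g.natDegree ≤ N := by
      rw [Polynomial.natDegree_le_iff_coeff_eq_zero]
      intro m hm
      rcases lt_or_eq_of_le (Nat.succ_le_of_lt hm) with h1 | h1
      · have hfm : f.coeff m = 0 :=
          Polynomial.coeff_eq_zero_of_natDegree_lt (lt_of_le_of_lt hf h1)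
        have hPm : (P (N + 1)).coeff m = 0 :=
          Polynomial.coeff_eq_zero_of_natDegree_lt (by rw [hdeg]; exact h1)
        simp [hg, hfm, hPm]
      · simp [hg, ← h1, hcoef, ha]
    obtain ⟨c, hc⟩ := ih g hgdeg
    refine ⟨fun m => if m = N + 1 then a else c m, ?_⟩
    rw [Finset.sum_range_succ]
    have : f = g + a • P (N + 1) := by rw [hg]; ring
    rw [this, hc]
    simp only [if_pos rfl]
    congr 1
    apply Finset.sum_congr rfl
    intro m hm
    rw [if_neg (Finset.mem_range.mp hm).ne]

private lemma orth_low (L : Polynomial ℂ →ₗ[ℂ] ℂ) (P : ℕ → Polynomial ℂ) (h : ℕ → ℂ)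
    (hmonic : ∀ n, (P n).Monic) (hdeg : ∀ n, (P n).natDegree = n)
    (horth : ∀ n m, L (P n * P m) = if n = m then h n else 0)
    {N n : ℕ} (hNn : N < n) (f : Polynomial ℂ) (hf : f.natDegree ≤ N) :
    L (f * P n) = 0 := by
  obtain ⟨c, hc⟩ := expand_aux P hmonic hdeg N f hf
  rw [hc, Finset.sum_mul, map_sum]
  apply Finset.sum_eq_zero
  intro m hm
  rw [smul_mul_assoc, map_smul, horth, if_neg (by have := Finset.mem_range.mp hm; omega)]
  simp


/-- Expansion of φ(x)·Pₙ(x−1) in the orthogonal basis: the coefficient of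
P_{n+k} vanishes for k < −p, i.e. there exist scalars B_k(n),
max(−n, −p) ≤ k ≤ q+1, with φ(x)Pₙ(x−1) = Σ B_k(n) P_{n+k}(x). -/
theorem laguerre_freud_expansion_B
    (L : Polynomial ℂ →ₗ[ℂ] ℂ) (P : ℕ → Polynomial ℂ) (h : ℕ → ℂ)
    (hmonic : ∀ n, (P n).Monic) (hdeg : ∀ n, (P n).natDegree = n)
    (hh : ∀ n, h n ≠ 0)
    (horth : ∀ n m, L (P n * P m) = if n = m then h n else 0)
    (p q : ℕ) (lam phi : Polynomial ℂ)
    (hlam : lam.degree = (p : ℕ)) (hphi : phi.degree = (q + 1 : ℕ))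
    (hPearson : ∀ π : Polynomial ℂ, L (lam * π) = L (phi * π.comp (X - 1))) :
    ∀ n : ℕ, ∃ B : ℤ → ℂ,
      phi * (P n).comp (X - 1) =
        ∑ k ∈ Finset.Icc (max (-(n : ℤ)) (-(p : ℤ))) ((q : ℤ) + 1),
          B k • P ((n : ℤ) + k).toNat := by
  intro n
  set f := phi * (P n).comp (X - 1) with hfdef
  have hphideg : phi.natDegree = q + 1 := natDegree_eq_of_degree_eq_some hphi
  have hlamdeg : lam.natDegree = p := natDegree_eq_of_degree_eq_some hlam
  have hXsub : (X - 1 : Polynomial ℂ).natDegree = 1 := by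
    simpa using natDegree_X_sub_C (1 : ℂ)
  have hcompdeg : ((P n).comp (X - 1)).natDegree ≤ n := by
    refine le_trans natDegree_comp_le ?_
    rw [hdeg, hXsub, mul_one]
  have hfdeg : f.natDegree ≤ n + q + 1 := by
    refine le_trans natDegree_mul_le ?_
    rw [hphideg]
    omega
  obtain ⟨c, hc⟩ := expand_aux P hmonic hdeg (n + q + 1) f hfdeg
  have hvanish : ∀ m : ℕ, m + p < n → c m = 0 := by
    intro m hm
    have key : L (f * P m) = 0 := by
      have hQ : f * P m = phi * ((P n * (P m).comp (X + 1)).comp (X - 1)) := by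
        have h1 : ((X + 1 : Polynomial ℂ)).comp (X - 1) = X := by
          simp [add_comp]
        rw [mul_comp, Polynomial.comp_assoc, h1, comp_X]
        ring
      rw [hQ, ← hPearson]
      have h2 : lam * (P n * (P m).comp (X + 1)) = (lam * (P m).comp (X + 1)) * P n := by
        ring
      rw [h2]
      refine orth_low L P h hmonic hdeg horth (N := p + m) (by omega) _ ?_
      refine le_trans natDegree_mul_le ?_
      have : ((P m).comp (X + 1)).natDegree ≤ m := by
        refine le_trans natDegree_comp_le ?_
        have hX1 : (X + 1 : Polynomial ℂ).natDegree = 1 := by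
          simpa using natDegree_X_add_C (1 : ℂ)
        rw [hdeg, hX1, mul_one]
      omega
    have hmem : m ∈ Finset.range (n + q + 2) := Finset.mem_range.mpr (by omega)
    have hLfm : L (f * P m) = c m * h m := by
      rw [hc, Finset.sum_mul, map_sum]
      rw [Finset.sum_eq_single m]
      · rw [smul_mul_assoc, map_smul, horth, if_pos rfl, smul_eq_mul]
      · intro j hj hjm
        rw [smul_mul_assoc, map_smul, horth, if_neg hjm, smul_zero]
      · intro hmem'; exact absurd hmem hmem'
    rw [key] at hLfm
    exact (mul_eq_zero.mp hLfm.symm).resolve_right (hh m)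
  refine ⟨fun k => c ((n : ℤ) + k).toNat, ?_⟩
  have hstep : f = ∑ m ∈ Finset.Icc (n - p) (n + q + 1), c m • P m := by
    rw [hc]
    symm
    refine Finset.sum_subset ?_ ?_
    · intro m hm
      rw [Finset.mem_Icc] at hm
      exact Finset.mem_range.mpr (by omega)
    · intro m hm hm'
      rw [Finset.mem_range] at hm
      rw [Finset.mem_Icc] at hm'
      have : m + p < n := by omega
      rw [hvanish m this, zero_smul]
  rw [hstep]
  refine Finset.sum_nbij' (i := fun m => (m : ℤ) - n) (j := fun k => ((n : ℤ) + k).toNat)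
    ?_ ?_ ?_ ?_ ?_
  · intro m hm
    rw [Finset.mem_Icc] at hm ⊢
    omega
  · intro k hk
    rw [Finset.mem_Icc] at hk ⊢
    omega
  · intro m hm
    rw [Finset.mem_Icc] at hm
    omega
  · intro k hk
    rw [Finset.mem_Icc] at hk
    omega
  · intro m hm
    rw [Finset.mem_Icc] at hm
    dsimp only
    congr 2 <;> omega
end

section
/- Let a1, a2 > 0, b > −1, 0 < z < 1, and let L be the generalized-Hahn moment functional L[f] = Σ_{x=0}^{∞} f(x)·(a1)_x (a2)_x z^x / ((b+1)_x x!). Let (P_n)_{n≥0} be a monic orthogonal polynomial sequence for L with recurrence coefficients β_n, γ_n, and let A_k(n), −2 ≤ k ≤ 2, be the unique coefficients in the expansion z(x+a1)(x+a2)·P_n(x+1) = Σ_{k=−2}^{2} A_k(n) P_{n+k}(x). Then for all n ≥ 1: A_{−1}(n) = γ_n (β_n + β_{n−1} − n + b + 1). -/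
open Polynomial Filter

section
variable {a1 a2 b z : ℝ} {w : ℕ → ℝ}

private lemma tendsto_ratio_aux (c e : ℝ) (he : 0 < e) :
    Tendsto (fun x : ℕ => ((x : ℝ) + c) / ((x : ℝ) + e)) atTop (nhds 1) := by
  have h0 : Tendsto (fun x : ℕ => (c - e) / ((x : ℝ) + e)) atTop (nhds 0) :=
    Tendsto.div_atTop tendsto_const_nhds
      (tendsto_atTop_add_const_right _ e tendsto_natCast_atTop_atTop)
  have h1 : Tendsto (fun x : ℕ => 1 + (c - e) / ((x : ℝ) + e)) atTop (nhds 1) := by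
    simpa using h0.const_add 1
  refine h1.congr fun x => ?_
  have hx : ((x : ℝ) + e) ≠ 0 := by positivity
  field_simp
  ring

private lemma hahn_summable' (ha1 : 0 < a1) (ha2 : 0 < a2) (hb : -1 < b)
    (hz0 : 0 < z) (hz1 : z < 1)
    (hw : ∀ x : ℕ, w x =
      (ascPochhammer ℝ x).eval a1 * (ascPochhammer ℝ x).eval a2 * z ^ x /
        ((ascPochhammer ℝ x).eval (b + 1) * x.factorial))
    (f : Polynomial ℝ) : Summable (fun x : ℕ => f.eval (x : ℝ) * w x) := by
  have hb1 : (0:ℝ) < b + 1 := by linarith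
  have hwpos : ∀ x : ℕ, 0 < w x := by
    intro x
    rw [hw]
    exact div_pos
      (mul_pos (mul_pos (ascPochhammer_pos x a1 ha1) (ascPochhammer_pos x a2 ha2))
        (pow_pos hz0 x))
      (mul_pos (ascPochhammer_pos x (b+1) hb1) (by exact_mod_cast x.factorial_pos))
  have hstep : ∀ x : ℕ, w (x + 1) =
      w x * (((x:ℝ) + a1) * ((x:ℝ) + a2) * z / (((x:ℝ) + (b+1)) * ((x:ℝ) + 1))) := by
    intro x
    have h1 : (ascPochhammer ℝ x).eval (b+1) ≠ 0 := (ascPochhammer_pos x _ hb1).ne'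
    have h2 : ((x.factorial : ℝ)) ≠ 0 := Nat.cast_ne_zero.mpr x.factorial_pos.ne'
    have h3 : ((x:ℝ) + (b+1)) ≠ 0 := by positivity
    have h4 : ((x:ℝ) + 1) ≠ 0 := by positivity
    rw [hw (x+1), hw x, ascPochhammer_succ_eval, ascPochhammer_succ_eval,
      ascPochhammer_succ_eval, Nat.factorial_succ]
    push_cast
    field_simp
    ring
  have hkey : ∀ d : ℕ, Summable (fun x : ℕ => ((x:ℝ) + 1) ^ d * w x) := by
    intro d
    apply summable_of_ratio_test_tendsto_lt_one hz1
    · exact Eventually.of_forall fun x => by have := hwpos x; positivity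
    · have hT : Tendsto (fun x : ℕ =>
          ((((x:ℝ)+2)/((x:ℝ)+1))^d * (((x:ℝ)+a1)/((x:ℝ)+1)) * (((x:ℝ)+a2)/((x:ℝ)+(b+1))) * z))
          atTop (nhds z) := by
        have t1 := tendsto_ratio_aux 2 1 one_pos
        have t2 := tendsto_ratio_aux a1 1 one_pos
        have t3 := tendsto_ratio_aux a2 (b+1) hb1
        have := (((t1.pow d).mul t2).mul t3).mul_const z
        simpa using this
      refine hT.congr fun x => ?_
      have hwx := hwpos x
      have hwx1 := hwpos (x+1)
      have h3 : (0:ℝ) < ((x:ℝ) + (b+1)) := by positivity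
      have h4 : (0:ℝ) < ((x:ℝ) + 1) := by positivity
      rw [Real.norm_eq_abs, Real.norm_eq_abs, abs_of_pos (by positivity),
        abs_of_pos (by positivity), hstep x]
      push_cast
      simp only [div_pow]
      field_simp
      ring
  set d := f.natDegree with hd
  set S := ∑ i ∈ Finset.range (d+1), |f.coeff i| with hS
  refine Summable.of_norm_bounded ((hkey d).mul_left S)
    fun x => ?_
  rw [norm_mul, Real.norm_eq_abs, Real.norm_eq_abs, abs_of_pos (hwpos x)]
  have h1 : |f.eval (x:ℝ)| ≤ S * ((x:ℝ)+1)^d := by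
    rw [eval_eq_sum_range, hS, Finset.sum_mul]
    refine (Finset.abs_sum_le_sum_abs _ _).trans (Finset.sum_le_sum fun i hi => ?_)
    rw [abs_mul, abs_pow, Nat.abs_cast]
    have hx : ((x:ℝ))^i ≤ ((x:ℝ)+1)^d :=
      (pow_le_pow_left₀ (Nat.cast_nonneg x) (by linarith) i).trans
        (pow_le_pow_right₀ (by linarith) (Finset.mem_range_succ_iff.mp hi))
    exact mul_le_mul_of_nonneg_left hx (abs_nonneg _)
  calc |f.eval (x:ℝ)| * w x ≤ (S * ((x:ℝ)+1)^d) * w x :=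
        mul_le_mul_of_nonneg_right h1 (hwpos x).le
    _ = S * (((x:ℝ)+1)^d * w x) := by ring


private lemma coeff_comp_X_sub_one {p : Polynomial ℝ} {j : ℕ} (hp : p.natDegree ≤ j + 1) :
    (p.comp (X - C 1)).coeff j = p.coeff j - (j + 1 : ℝ) * p.coeff (j + 1) := by
  have hrepr : p = ∑ i ∈ Finset.range (j + 2), C (p.coeff i) * X ^ i := by
    conv_lhs => rw [p.as_sum_range' (j + 2) (by omega)]
    exact Finset.sum_congr rfl fun i _ => (C_mul_X_pow_eq_monomial).symm
  have hXsub : (X - C (1:ℝ)) = X + C (-1 : ℝ) := by rw [C_neg]; ring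
  conv_lhs => rw [hrepr]
  rw [hXsub, sum_comp]
  simp only [mul_comp, C_comp, pow_comp, X_comp]
  rw [finset_sum_coeff]
  simp only [coeff_C_mul, coeff_X_add_C_pow]
  rw [Finset.sum_range_succ, Finset.sum_range_succ]
  rw [Finset.sum_eq_zero (fun i hi => by
    rw [Nat.choose_eq_zero_of_lt (Finset.mem_range.mp hi), Nat.cast_zero, mul_zero, mul_zero])]
  simp [Nat.choose_succ_self_right, Nat.sub_self, Nat.succ_sub]
  ring

end

/-- for the generalized Hahn polynomials of type I,
A₋₁(n) = γₙ(βₙ + β_{n−1} − n + b + 1) for n ≥ 1. -/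
theorem generalized_hahn_A_minus_one
    (a1 a2 b z : ℝ) (ha1 : 0 < a1) (ha2 : 0 < a2) (hb : -1 < b)
    (hz0 : 0 < z) (hz1 : z < 1)
    (w : ℕ → ℝ)
    (hw : ∀ x : ℕ, w x =
      (ascPochhammer ℝ x).eval a1 * (ascPochhammer ℝ x).eval a2 * z ^ x /
        ((ascPochhammer ℝ x).eval (b + 1) * x.factorial))
    (P : ℕ → Polynomial ℝ) (h : ℕ → ℝ)
    (hmonic : ∀ n, (P n).Monic) (hdeg : ∀ n, (P n).natDegree = n)
    (hh : ∀ n, h n ≠ 0)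
    (horth : ∀ n m : ℕ,
      (∑' x : ℕ, (P n * P m).eval (x : ℝ) * w x) = if n = m then h n else 0)
    (β γ : ℕ → ℝ) (hγ0 : γ 0 = 0)
    (hrec : ∀ n : ℕ, X * P n = P (n + 1) + C (β n) * P n + C (γ n) * P (n - 1))
    (A : ℕ → ℤ → ℝ)
    (hA : ∀ n : ℕ,
      C z * (X + C a1) * (X + C a2) * (P n).comp (X + 1) =
        ∑ k ∈ Finset.Icc (max (-(n : ℤ)) (-2)) 2,
          A n k • P ((n : ℤ) + k).toNat) :
    ∀ n : ℕ, 1 ≤ n →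
      A n (-1) = γ n * (β n + β (n - 1) - (n : ℝ) + b + 1) := by
  have hb1 : (0:ℝ) < b + 1 := by linarith
  have hsum : ∀ f : Polynomial ℝ, Summable (fun x : ℕ => f.eval (x : ℝ) * w x) :=
    hahn_summable' ha1 ha2 hb hz0 hz1 hw
  -- the moment functional as a linear map
  let L : Polynomial ℝ →ₗ[ℝ] ℝ :=
    { toFun := fun f => ∑' x : ℕ, f.eval (x : ℝ) * w x
      map_add' := fun f g => by
        simp only [eval_add, add_mul]
        exact Summable.tsum_add (hsum f) (hsum g)
      map_smul' := fun c f => by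
        simp only [RingHom.id_apply, smul_eq_mul]
        rw [← tsum_mul_left]
        exact tsum_congr fun x => by simp [mul_assoc] }
  have hLdef : ∀ f, L f = ∑' x : ℕ, f.eval (x : ℝ) * w x := fun f => rfl
  have horthL : ∀ i j, L (P i * P j) = if i = j then h i else 0 :=
    fun i j => (hLdef _).trans (horth i j)
  have hLC : ∀ (c : ℝ) (i j : ℕ), L (P i * (C c * P j)) = c * (if i = j then h i else 0) := by
    intro c i j
    rw [C_mul', mul_smul_comm, map_smul, smul_eq_mul, horthL]
  have hP0 : P 0 = 1 := (hmonic 0).natDegree_eq_zero.mp (hdeg 0)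
  -- orthogonality to lower degrees
  have hlow : ∀ d : ℕ, ∀ k : ℕ, d < k → ∀ q : Polynomial ℝ, q.natDegree ≤ d →
      L (P k * q) = 0 := by
    intro d
    induction d with
    | zero =>
      intro k hk q hq
      have hqC : q = C (q.coeff 0) := eq_C_of_natDegree_le_zero hq
      have : P k * q = q.coeff 0 • (P k * P 0) := by
        rw [hP0, mul_one]
        conv_lhs => rw [hqC]
        rw [mul_comm, C_mul']
      rw [this, map_smul, smul_eq_mul, horthL, if_neg (by omega), mul_zero]
    | succ d ih =>
      intro k hk q hq
      set c := q.coeff (d+1) with hc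
      have hP1 : (P (d+1)).coeff (d+1) = 1 := by
        have := (hmonic (d+1)).coeff_natDegree
        rwa [hdeg] at this
      have hr : (q - c • P (d+1)).natDegree ≤ d := by
        refine natDegree_le_iff_coeff_eq_zero.mpr fun N hN => ?_
        rw [coeff_sub, coeff_smul, smul_eq_mul]
        rcases eq_or_lt_of_le (Nat.succ_le_of_lt hN) with hND | hND
        · rw [← hND, hP1, mul_one, hc, sub_self]
        · rw [coeff_eq_zero_of_natDegree_lt (lt_of_le_of_lt hq hND),
            coeff_eq_zero_of_natDegree_lt (by rw [hdeg]; omega), mul_zero, sub_zero]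
      have hsplit : q = (q - c • P (d+1)) + c • P (d+1) := by ring
      rw [hsplit, mul_add, map_add, ih k (by omega) _ hr, zero_add,
        mul_smul_comm, map_smul, smul_eq_mul, horthL, if_neg (by omega), mul_zero]
  have hlowuse : ∀ (k : ℕ) (q : Polynomial ℝ), q.natDegree < k → L (P k * q) = 0 :=
    fun k q hq => hlow q.natDegree k hq q le_rfl
  -- h (m+1) = γ (m+1) * h m
  have hhrel : ∀ m : ℕ, h (m+1) = γ (m+1) * h m := by
    intro m
    have e1 : L (P (m+1) * (X * P m)) = h (m+1) := by
      rw [hrec m, mul_add, mul_add, map_add, map_add, horthL, if_pos rfl, hLC, hLC,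
        if_neg (by omega), if_neg (by omega), mul_zero, mul_zero, add_zero, add_zero]
    have e2 : L (P (m+1) * (X * P m)) = γ (m+1) * h m := by
      have hcomm : P (m+1) * (X * P m) = (X * P (m+1)) * P m := by ring
      have hstep : (X * P (m+1)) * P m
          = P (m+1+1) * P m + (C (β (m+1)) * P (m+1)) * P m
            + (C (γ (m+1)) * P (m+1-1)) * P m := by
        rw [hrec (m+1)]; ring
      rw [hcomm, hstep]
      simp only [Nat.add_sub_cancel]
      rw [map_add, map_add]
      have t1 : L (P (m+1+1) * P m) = 0 := by rw [horthL, if_neg (by omega)]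
      have t2 : (C (β (m+1)) * P (m+1)) * P m = P (m+1) * (C (β (m+1)) * P m) := by ring
      have t3 : (C (γ (m+1)) * P m) * P m = P m * (C (γ (m+1)) * P m) := by ring
      rw [t1, t2, t3, hLC, hLC, if_neg (by omega), mul_zero, if_pos rfl, zero_add, zero_add]
    rw [← e1, e2]
  -- Pearson relation, pointwise
  have hpearson_pt : ∀ x : ℕ, z * ((x:ℝ) + a1) * ((x:ℝ) + a2) * w x
      = ((x:ℝ)+1) * (((x:ℝ)+1) + b) * w (x+1) := by
    intro x
    have h1 : (ascPochhammer ℝ x).eval (b+1) ≠ 0 := (ascPochhammer_pos x _ hb1).ne'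
    have h2 : ((x.factorial : ℝ)) ≠ 0 := Nat.cast_ne_zero.mpr x.factorial_pos.ne'
    have h3 : ((x:ℝ) + (b+1)) ≠ 0 := by positivity
    have h4 : ((x:ℝ) + 1) ≠ 0 := by positivity
    rw [hw (x+1), hw x, ascPochhammer_succ_eval, ascPochhammer_succ_eval,
      ascPochhammer_succ_eval, Nat.factorial_succ]
    push_cast
    field_simp
    ring
  -- Pearson relation, functional form
  have hpearson : ∀ g : Polynomial ℝ,
      L (C z * (X + C a1) * (X + C a2) * g.comp (X + 1)) = L (X * (X + C b) * g) := by
    intro g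
    have key : ∀ x : ℕ, (C z * (X + C a1) * (X + C a2) * g.comp (X + 1)).eval (x:ℝ) * w x
        = (X * (X + C b) * g).eval (((x+1 : ℕ)) : ℝ) * w (x+1) := by
      intro x
      have hpt := hpearson_pt x
      push_cast
      simp only [eval_mul, eval_add, eval_X, eval_C, eval_comp, eval_one]
      linear_combination eval ((x:ℝ)+1) g * hpt
    rw [hLdef, hLdef, Summable.tsum_eq_zero_add (hsum (X * (X + C b) * g))]
    have h0 : (X * (X + C b) * g).eval ((0:ℕ):ℝ) * w 0 = 0 := by
      simp
    rw [h0, zero_add]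
    exact tsum_congr key
  -- coefficient relation from the recurrence
  have hcP : ∀ i : ℕ, (P (i+2)).coeff (i+1) = (P (i+1)).coeff i - β (i+1) := by
    intro i
    have := congrArg (fun p : Polynomial ℝ => p.coeff (i+1)) (hrec (i+1))
    simp only [coeff_add, coeff_X_mul, coeff_C_mul, Nat.add_sub_cancel] at this
    have hm1 : (P (i+1)).coeff (i+1) = 1 := by
      have := (hmonic (i+1)).coeff_natDegree; rwa [hdeg] at this
    have hm2 : (P i).coeff (i+1) = 0 :=
      coeff_eq_zero_of_natDegree_lt (by rw [hdeg]; omega)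
    rw [hm1, hm2, mul_one, mul_zero, add_zero] at this
    linarith [this]
  -- main argument
  intro n hn
  obtain ⟨m, rfl⟩ : ∃ m, n = m + 1 := ⟨n - 1, (Nat.succ_pred_eq_of_pos hn).symm⟩
  -- RHS: apply L (P m * ·) to the expansion
  have hRHS : L (P m * (C z * (X + C a1) * (X + C a2) * (P (m+1)).comp (X + 1)))
      = A (m+1) (-1) * h m := by
    rw [hA (m+1), Finset.mul_sum, map_sum]
    have hterm : ∀ k : ℤ, L (P m * (A (m+1) k • P ((((m+1:ℕ)):ℤ) + k).toNat))
        = A (m+1) k * (if m = ((((m+1:ℕ)):ℤ) + k).toNat then h m else 0) := by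
      intro k
      rw [mul_smul_comm, map_smul, smul_eq_mul, horthL]
    rw [Finset.sum_congr rfl fun k _ => hterm k]
    rw [Finset.sum_eq_single (-1 : ℤ)]
    · have ht : ((((m+1:ℕ)):ℤ) + (-1)).toNat = m := by omega
      rw [ht, if_pos rfl]
    · intro k hk hkne
      have hmem := Finset.mem_Icc.mp hk
      have hlb : -(((m+1:ℕ)):ℤ) ≤ k := le_trans (le_max_left _ _) hmem.1
      rw [if_neg (by omega), mul_zero]
    · intro hnot
      exfalso
      refine hnot (Finset.mem_Icc.mpr ⟨max_le (by omega) (by omega), by omega⟩)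
  -- LHS: move to the φ-side via Pearson
  set s : Polynomial ℝ := (P m).comp (X - C 1) with hs
  set q : Polynomial ℝ := X * (X + C b) * s with hq
  have hcompback : s.comp (X + 1) = P m := by
    rw [hs, comp_assoc]
    have : (X - C (1:ℝ)).comp (X + 1) = X := by
      rw [sub_comp, X_comp, C_comp, C_1]
      ring
    rw [this, comp_X]
  have hLHS : L (P m * (C z * (X + C a1) * (X + C a2) * (P (m+1)).comp (X + 1)))
      = L (P (m+1) * q) := by
    have e1 : P m * (C z * (X + C a1) * (X + C a2) * (P (m+1)).comp (X + 1))
        = C z * (X + C a1) * (X + C a2) * (P (m+1) * s).comp (X + 1) := by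
      rw [mul_comp, hcompback]; ring
    have e2 : X * (X + C b) * (P (m+1) * s) = P (m+1) * q := by rw [hq]; ring
    rw [e1, hpearson (P (m+1) * s), e2]
  -- structure of q
  have hsmonic : s.Monic := (hmonic m).comp_X_sub_C 1
  have hsdeg : s.natDegree = m := by
    rw [hs, natDegree_comp, hdeg, natDegree_X_sub_C, mul_one]
  have hXXb : (X * (X + C b) : Polynomial ℝ).Monic := monic_X.mul (monic_X_add_C b)
  have hXXbdeg : (X * (X + C b) : Polynomial ℝ).natDegree = 2 := by
    rw [monic_X.natDegree_mul (monic_X_add_C b), natDegree_X, natDegree_X_add_C]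
  have hqmonic : q.Monic := hXXb.mul hsmonic
  have hqdeg : q.natDegree = m + 2 := by
    rw [hq, hXXb.natDegree_mul hsmonic, hXXbdeg, hsdeg]
    omega
  set d : ℝ := q.coeff (m+1) - (P (m+2)).coeff (m+1) with hd
  set r : Polynomial ℝ := q - P (m+2) - C d * P (m+1) with hr
  have hrdeg : r.natDegree ≤ m := by
    refine natDegree_le_iff_coeff_eq_zero.mpr fun N hN => ?_
    have hPm1top : (P (m+1)).coeff (m+1) = 1 := by
      have := (hmonic (m+1)).coeff_natDegree; rwa [hdeg] at this
    rw [hr, coeff_sub, coeff_sub, coeff_C_mul]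
    rcases eq_or_lt_of_le (Nat.succ_le_of_lt hN) with hND | hND
    · rw [← hND, hPm1top, mul_one, hd]; ring
    rcases eq_or_lt_of_le (Nat.succ_le_of_lt hND) with hND2 | hND2
    · have hc1 : q.coeff (m+2) = 1 := by
        have := hqmonic.coeff_natDegree; rwa [hqdeg] at this
      have hc2 : (P (m+2)).coeff (m+2) = 1 := by
        have := (hmonic (m+2)).coeff_natDegree; rwa [hdeg] at this
      have hc3 : (P (m+1)).coeff (m+2) = 0 :=
        coeff_eq_zero_of_natDegree_lt (by rw [hdeg]; omega)
      rw [← hND2, hc1, hc2, hc3, mul_zero]; ring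
    · rw [coeff_eq_zero_of_natDegree_lt (by rw [hqdeg]; omega),
        coeff_eq_zero_of_natDegree_lt (by rw [hdeg]; omega),
        coeff_eq_zero_of_natDegree_lt (by rw [hdeg]; omega), mul_zero]
      ring
  have hqsplit : q = P (m+2) + C d * P (m+1) + r := by rw [hr]; ring
  have hLq : L (P (m+1) * q) = d * (γ (m+1) * h m) := by
    have : P (m+1) * q = P (m+1) * P (m+2) + P (m+1) * (C d * P (m+1)) + P (m+1) * r := by
      rw [hqsplit]; ring
    rw [this, map_add, map_add, horthL, if_neg (by omega), hLC, if_pos rfl,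
      hlowuse (m+1) r (by omega), add_zero, zero_add, hhrel m]
  -- compute d
  have hdval : d = β (m+1) + β m + b - m := by
    have hcP2 : (P (m+2)).coeff (m+1) = (P (m+1)).coeff m - β (m+1) := hcP m
    rcases Nat.eq_zero_or_pos m with hm0 | hmpos
    · subst hm0
      have hs1 : s = 1 := by rw [hs, hP0, one_comp]
      have hqc : q.coeff 1 = b := by
        rw [hq, hs1, mul_one]
        simp [coeff_X_mul, coeff_add, coeff_C]
      have hc1 : (P 1).coeff 0 = -β 0 := by
        have := congrArg (fun p : Polynomial ℝ => p.coeff 0) (hrec 0)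
        simp only [mul_coeff_zero, coeff_X_zero, zero_mul, coeff_add, hγ0, C_0,
          coeff_zero, coeff_C_zero, add_zero, hP0, coeff_one_zero, mul_one] at this
        linarith [this]
      rw [hd, hqc, hcP2, hc1]
      push_cast
      ring
    · obtain ⟨j, rfl⟩ : ∃ j, m = j + 1 := ⟨m - 1, (Nat.succ_pred_eq_of_pos hmpos).symm⟩
      have hsj : s.coeff j = (P (j+1)).coeff j - (j+1 : ℝ) := by
        have hPtop : (P (j+1)).coeff (j+1) = 1 := by
          have := (hmonic (j+1)).coeff_natDegree; rwa [hdeg] at this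
        have := coeff_comp_X_sub_one (p := P (j+1)) (j := j) (by rw [hdeg])
        rw [hPtop, mul_one] at this
        rw [hs, this]
      have hstop : s.coeff (j+1) = 1 := by
        have := hsmonic.coeff_natDegree; rwa [hsdeg] at this
      have hqc : q.coeff (j+1+1) = s.coeff j + b := by
        have heq2 : q = X^2 * s + C b * (X * s) := by rw [hq]; ring
        rw [heq2, coeff_add, coeff_C_mul, coeff_X_pow_mul', coeff_X_mul, hstop, mul_one]
        rw [if_pos (by omega), show j+1+1-2 = j by omega]
      have hcPj : (P (j+2)).coeff (j+1) = (P (j+1)).coeff j - β (j+1) := hcP j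
      rw [hd, hqc, hcP2, hcPj, hsj]
      push_cast
      ring
  -- conclude
  have hfin : A (m+1) (-1) * h m = (γ (m+1) * d) * h m := by
    rw [← hRHS, hLHS, hLq]; ring
  have := mul_right_cancel₀ (hh m) hfin
  rw [this, hdval]
  simp only [Nat.add_sub_cancel]
  push_cast
  ring
end
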